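/- Every arithmetic subgroup Γ of GL_n(ℤ) contains a finite-index subgroup that is neat, i.e., such that for every element of the subgroup the multiplicative subgroup of ℂ* generated by its eigenvalues is torsion-free. -/

import Mathlib

open Matrix Polynomial IntermediateField

section helpers

lemma abs_multiset_prod' (s : Multiset ℂ) : ‖s.prod‖ = (s.map (fun z => ‖z‖)).prod := by
  induction s using Multiset.induction with
  | empty => simp
  | cons x s ih => simp [norm_mul, ih]

lemma multiset_prod_le_pow' (s : Multiset ℝ) (a : ℝ) (ha : 0 ≤ a)
    (h : ∀ x ∈ s, 0 ≤ x ∧ x ≤ a) : s.prod ≤ a ^ (Multiset.card s) := by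
  induction s using Multiset.induction with
  | empty => simp
  | cons x s ih =>
    have hx := h x (Multiset.mem_cons_self x s)
    have hs : ∀ y ∈ s, 0 ≤ y ∧ y ≤ a := fun y hy => h y (Multiset.mem_cons_of_mem hy)
    have hsprod : 0 ≤ s.prod := Multiset.prod_nonneg fun y hy => (hs y hy).1
    have hsle := ih hs
    calc (x ::ₘ s).prod = x * s.prod := Multiset.prod_cons x s
    _ ≤ a * a ^ (Multiset.card s) := by
        apply mul_le_mul hx.2 hsle hsprod ha
    _ = a ^ (Multiset.card (x ::ₘ s)) := by rw [Multiset.card_cons, pow_succ]; ring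

lemma real_pow_eq_one (r : ℝ) (hr : 0 ≤ r) (m : ℕ) (hm : m ≠ 0) (h : r ^ m = 1) : r = 1 := by
  rcases lt_trichotomy r 1 with hlt | heq | hgt
  · have : r ^ m < 1 := pow_lt_one₀ hr hlt hm
    linarith
  · exact heq
  · have : 1 < r ^ m := one_lt_pow₀ hgt hm
    linarith

/-- A root of unity which is congruent to `1` modulo `3` (in the ring of algebraic
integers) equals `1`. -/
lemma root_of_unity_near_one (ζ : ℂ) (m : ℕ) (hm : m ≠ 0) (hζ : ζ ^ m = 1)
    (α : ℂ) (hα : IsIntegral ℤ α) (heq : ζ = 1 + 3 * α) : ζ = 1 := by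
  suffices hα0 : α = 0 by rw [heq, hα0]; ring
  have hαQ : IsIntegral ℚ α := hα.tower_top
  by_contra hne
  set p : ℚ[X] := minpoly ℚ α with hp
  have hpz : p = (minpoly ℤ α).map (algebraMap ℤ ℚ) :=
    minpoly.isIntegrallyClosed_eq_field_fractions' ℚ hα
  have hmonic : p.Monic := minpoly.monic hαQ
  set P : ℂ[X] := p.map (algebraMap ℚ ℂ) with hP
  have hPmonic : P.Monic := hmonic.map _
  have hsplits : P.Splits := IsAlgClosed.splits P
  -- every root of P has absolute value at most 2/3
  have hroots : ∀ β ∈ P.roots, ‖β‖ ≤ 2/3 := by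
    intro β hβ
    have hβ' : β ∈ p.aroots ℂ := hβ
    let φ : ℚ⟮α⟯ →ₐ[ℚ] ℂ := (IntermediateField.algHomAdjoinIntegralEquiv ℚ hαQ).symm ⟨β, hβ'⟩
    have hφgen : φ (IntermediateField.AdjoinSimple.gen ℚ α) = β :=
      IntermediateField.algHomAdjoinIntegralEquiv_symm_apply_gen ℚ hαQ _
    set x := IntermediateField.AdjoinSimple.gen ℚ α with hxdef
    have hx : (x : ℂ) = α := rfl
    set z : ℚ⟮α⟯ := 1 + 3 * x with hz
    have h3 : ((3 : ℚ⟮α⟯) : ℂ) = 3 := by norm_cast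
    have hzc : (z : ℂ) = ζ := by
      rw [heq, hz]
      push_cast [hx, h3]
      ring
    have hzm : z ^ m = 1 := by
      have : ((z ^ m : ℚ⟮α⟯) : ℂ) = ((1 : ℚ⟮α⟯) : ℂ) := by
        push_cast [hzc, hζ]
        rfl
      exact_mod_cast this
    have hφzm : (φ z) ^ m = 1 := by rw [← map_pow, hzm, _root_.map_one]
    have habs : ‖φ z‖ = 1 := by
      apply real_pow_eq_one _ (norm_nonneg _) m hm
      rw [← norm_pow, hφzm, norm_one]
    have hφz : φ z = 1 + 3 * β := by
      rw [hz]
      rw [_root_.map_add, _root_.map_mul, _root_.map_one, hφgen, map_ofNat]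
    have hβeq : β = (φ z - 1) / 3 := by rw [hφz]; ring
    rw [hβeq, norm_div]
    have h1 : ‖φ z - 1‖ ≤ 2 := by
      calc ‖φ z - 1‖ ≤ ‖φ z‖ + ‖(1:ℂ)‖ := norm_sub_le _ _
      _ = 2 := by rw [habs, norm_one]; norm_num
    have h3' : ‖(3:ℂ)‖ = 3 := by norm_num
    rw [h3']
    linarith
  -- the constant coefficient
  have hcard : Multiset.card P.roots = P.natDegree :=
    (Polynomial.splits_iff_card_roots).mp hsplits
  have hd : 1 ≤ p.natDegree := minpoly.natDegree_pos hαQ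
  have hdP : P.natDegree = p.natDegree := hmonic.natDegree_map _
  have hcoeff : P.coeff 0 = (-1) ^ P.natDegree * P.roots.prod :=
    hsplits.coeff_zero_eq_prod_roots_of_monic hPmonic
  have hnorm : ‖P.coeff 0‖ ≤ (2/3 : ℝ) ^ P.natDegree := by
    rw [hcoeff, norm_mul, norm_pow, norm_neg, norm_one, one_pow, one_mul,
      abs_multiset_prod', ← hcard]
    have : Multiset.card P.roots = Multiset.card (P.roots.map (fun z => ‖z‖)) := by
      rw [Multiset.card_map]
    rw [this]
    apply multiset_prod_le_pow' _ _ (by norm_num)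
    intro r hr
    obtain ⟨w, hw, rfl⟩ := Multiset.mem_map.mp hr
    exact ⟨norm_nonneg w, hroots w hw⟩
  have hlt1 : ‖P.coeff 0‖ < 1 := by
    calc ‖P.coeff 0‖ ≤ (2/3 : ℝ) ^ P.natDegree := hnorm
    _ < 1 := by
        apply pow_lt_one₀ (by norm_num) (by norm_num)
        omega
  have hPint : P = (minpoly ℤ α).map (algebraMap ℤ ℂ) := by
    rw [hP, hpz, Polynomial.map_map, ← IsScalarTower.algebraMap_eq]
  have hcoeffint : P.coeff 0 = ((minpoly ℤ α).coeff 0 : ℂ) := by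
    rw [hPint, Polynomial.coeff_map]
    simp
  rw [hcoeffint] at hlt1
  have hc0 : ((minpoly ℤ α).coeff 0 : ℤ) = 0 := by
    have h2 : |((minpoly ℤ α).coeff 0 : ℝ)| < 1 := by
      rwa [← Complex.norm_intCast]
    have h2' : |(minpoly ℤ α).coeff 0| < 1 := by exact_mod_cast h2
    exact Int.abs_lt_one_iff.mp h2'
  have hq0 : p.coeff 0 = 0 := by
    rw [hpz, Polynomial.coeff_map, hc0]
    simp
  exact hne ((minpoly.coeff_zero_eq_zero hαQ).mp hq0)

lemma spectrum_zero_subset {n : ℕ} (x : ℂ)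
    (hx : x ∈ spectrum ℂ (0 : Matrix (Fin n) (Fin n) ℂ)) : x = 0 := by
  by_contra h
  rw [spectrum.mem_iff, sub_zero] at hx
  exact hx (IsUnit.map (algebraMap ℂ (Matrix (Fin n) (Fin n) ℂ)) (isUnit_iff_ne_zero.2 h))

/-- Eigenvalues of an integer matrix are algebraic integers. -/
lemma isIntegral_of_mem_spectrum {n : ℕ} (A : Matrix (Fin n) (Fin n) ℤ) {μ : ℂ}
    (h : μ ∈ spectrum ℂ (A.map (Int.cast : ℤ → ℂ))) : IsIntegral ℤ μ := by
  refine ⟨A.charpoly, A.charpoly_monic, ?_⟩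
  set M : Matrix (Fin n) (Fin n) ℂ := A.map (Int.cast : ℤ → ℂ) with hM
  have hmap : M.charpoly = A.charpoly.map (Int.castRingHom ℂ) := by
    rw [hM]
    exact Matrix.charpoly_map A (Int.castRingHom ℂ)
  have hC : aeval M M.charpoly = 0 := Matrix.aeval_self_charpoly M
  have hmem : eval μ M.charpoly ∈ spectrum ℂ (aeval M M.charpoly) :=
    spectrum.subset_polynomial_aeval M M.charpoly ⟨μ, h, rfl⟩
  rw [hC] at hmem
  have h0 : eval μ M.charpoly = 0 := spectrum_zero_subset _ hmem
  rw [hmap, eval_map] at h0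
  exact h0

lemma mem_spectrum_shift {n : ℕ} (B : Matrix (Fin n) (Fin n) ℂ) {μ : ℂ}
    (h : μ ∈ spectrum ℂ ((1 : Matrix (Fin n) (Fin n) ℂ) + (3 : ℂ) • B)) :
    (μ - 1) / 3 ∈ spectrum ℂ B := by
  rw [spectrum.mem_iff] at h ⊢
  intro hu
  apply h
  have key : algebraMap ℂ (Matrix (Fin n) (Fin n) ℂ) μ -
        ((1 : Matrix (Fin n) (Fin n) ℂ) + (3 : ℂ) • B)
      = (3 : ℂ) • (algebraMap ℂ (Matrix (Fin n) (Fin n) ℂ) ((μ - 1) / 3) - B) := by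
    simp only [Algebra.algebraMap_eq_smul_one, smul_sub, smul_smul]
    rw [show (3:ℂ) * ((μ - 1) / 3) = μ - 1 by ring, sub_smul, one_smul]
    abel
  rw [key]
  have h3 : (3:ℂ) • (algebraMap ℂ (Matrix (Fin n) (Fin n) ℂ) ((μ - 1) / 3) - B)
      = (Units.mk0 (3:ℂ) (by norm_num)) •
        (algebraMap ℂ (Matrix (Fin n) (Fin n) ℂ) ((μ - 1) / 3) - B) := rfl
  rw [h3]
  exact (isUnit_smul_iff _ _).mpr hu

end helpers

/-- The multiplicative subgroup of `ℂˣ` generated by the complex eigenvalues of an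
integer matrix `g` (an element of `GL n ℤ`), i.e. by the units whose underlying complex
number lies in the spectrum of `g` viewed as a complex matrix. -/
def eigenvalueSubgroup (n : ℕ) (g : GL (Fin n) ℤ) : Subgroup ℂˣ :=
  Subgroup.closure {u : ℂˣ | (u : ℂ) ∈ spectrum ℂ ((g : Matrix (Fin n) (Fin n) ℤ).map
    (Int.cast : ℤ → ℂ))}

/-- The (December 2024) Mathlib definition: a monoid is torsion-free if all non-identity
elements have infinite order. -/
def Monoid.IsTorsionFree (G : Type*) [Monoid G] : Prop :=
  ∀ g : G, g ≠ 1 → ¬IsOfFinOrder g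

/-- every subgroup Γ of `GL n ℤ` contains a finite-index subgroup that is
neat: for every element of the subgroup, the subgroup of `ℂˣ` generated by its
eigenvalues is torsion-free. -/
theorem stmt_2 (n : ℕ) (Γ : Subgroup (GL (Fin n) ℤ)) :
    ∃ H : Subgroup (GL (Fin n) ℤ), H ≤ Γ ∧ (H.subgroupOf Γ).FiniteIndex ∧
      ∀ g ∈ H, Monoid.IsTorsionFree ↥(eigenvalueSubgroup n g) := by
  classical
  set f : GL (Fin n) ℤ →* GL (Fin n) (ZMod 3) :=
    Units.map (RingHom.mapMatrix (Int.castRingHom (ZMod 3))).toMonoidHom with hf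
  refine ⟨f.ker ⊓ Γ, inf_le_right, ?_, ?_⟩
  · haveI : f.ker.FiniteIndex := Subgroup.finiteIndex_ker f
    rw [Subgroup.inf_subgroupOf_right]
    infer_instance
  · intro g hg
    have hker : f g = 1 := (Subgroup.mem_inf.mp hg).1
    -- entrywise divisibility
    have hker' : ((g : Matrix (Fin n) (Fin n) ℤ)).map (Int.cast : ℤ → ZMod 3) = 1 := by
      have := congrArg Units.val hker
      exact this
    obtain ⟨B, hB⟩ : ∃ B : Matrix (Fin n) (Fin n) ℤ,
        (g : Matrix (Fin n) (Fin n) ℤ) = 1 + (3:ℤ) • B := by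
      refine ⟨Matrix.of (fun i j =>
        ((g : Matrix (Fin n) (Fin n) ℤ) i j - (1 : Matrix (Fin n) (Fin n) ℤ) i j) / 3), ?_⟩
      ext i j
      have hdvd : (3 : ℤ) ∣ ((g : Matrix (Fin n) (Fin n) ℤ) i j
          - (1 : Matrix (Fin n) (Fin n) ℤ) i j) := by
        rw [show (3:ℤ) = ((3:ℕ):ℤ) by norm_num, ← ZMod.intCast_zmod_eq_zero_iff_dvd]
        push_cast
        have h1 : (((g : Matrix (Fin n) (Fin n) ℤ) i j : ZMod 3))
            = (1 : Matrix (Fin n) (Fin n) (ZMod 3)) i j := by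
          rw [← hker']
          rfl
        rw [h1]
        rcases eq_or_ne i j with rfl | hij
        · simp [Matrix.one_apply]
        · simp [Matrix.one_apply, hij]
      simp only [Matrix.add_apply, Matrix.smul_apply, Matrix.of_apply, smul_eq_mul]
      rw [Int.mul_ediv_cancel' hdvd]
      ring
    -- the complex matrix and its decomposition
    set M : Matrix (Fin n) (Fin n) ℂ := (g : Matrix (Fin n) (Fin n) ℤ).map (Int.cast : ℤ → ℂ)
      with hM
    have hMdec : M = (1 : Matrix (Fin n) (Fin n) ℂ) + (3 : ℂ) • (B.map (Int.cast : ℤ → ℂ)) := by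
      rw [hM, hB]
      ext i j
      simp only [Matrix.map_apply, Matrix.add_apply, Matrix.smul_apply, Matrix.one_apply,
        smul_eq_mul]
      rcases eq_or_ne i j with rfl | hij
      · simp
      · simp [hij]
    -- the complex unit corresponding to g
    set uM : (Matrix (Fin n) (Fin n) ℂ)ˣ :=
      Units.map (RingHom.mapMatrix (Int.castRingHom ℂ)).toMonoidHom g with huM
    have huMval : (uM : Matrix (Fin n) (Fin n) ℂ) = M := rfl
    have huMinv : ((uM⁻¹ : (Matrix (Fin n) (Fin n) ℂ)ˣ) : Matrix (Fin n) (Fin n) ℂ)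
        = ((g⁻¹ : GL (Fin n) ℤ) : Matrix (Fin n) (Fin n) ℤ).map (Int.cast : ℤ → ℂ) := by
      rw [huM, ← map_inv]
      rfl
    -- the key invariant, proved by closure induction
    have hinv : ∀ u : ℂˣ, u ∈ eigenvalueSubgroup n g →
        IsIntegral ℤ (u : ℂ) ∧ IsIntegral ℤ ((u⁻¹ : ℂˣ) : ℂ) ∧
          ∃ α : ℂ, IsIntegral ℤ α ∧ (u : ℂ) = 1 + 3 * α := by
      intro u hu
      refine Subgroup.closure_induction ?_ ?_ ?_ ?_ hu
      · intro v hv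
        have hvmem : (v : ℂ) ∈ spectrum ℂ M := hv
        have hint : IsIntegral ℤ (v : ℂ) := isIntegral_of_mem_spectrum (g : Matrix (Fin n) (Fin n) ℤ) hvmem
        have hvinv : ((v⁻¹ : ℂˣ) : ℂ) ∈ spectrum ℂ
            (((g⁻¹ : GL (Fin n) ℤ) : Matrix (Fin n) (Fin n) ℤ).map (Int.cast : ℤ → ℂ)) := by
          rw [← huMinv]
          have : ((v : ℂ))⁻¹ ∈ spectrum ℂ ((uM⁻¹ : (Matrix (Fin n) (Fin n) ℂ)ˣ)
              : Matrix (Fin n) (Fin n) ℂ) := by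
            refine (spectrum.inv₀_mem_iff (a := uM⁻¹)).mpr ?_
            rw [inv_inv]
            rw [huMval]
            exact hvmem
          simpa using this
        have hintinv : IsIntegral ℤ ((v⁻¹ : ℂˣ) : ℂ) :=
          isIntegral_of_mem_spectrum _ hvinv
        refine ⟨hint, hintinv, ((v : ℂ) - 1) / 3, ?_, by field_simp; ring⟩
        have := mem_spectrum_shift (B.map (Int.cast : ℤ → ℂ)) (by rw [← hMdec]; exact hvmem)
        exact isIntegral_of_mem_spectrum B this
      · exact ⟨isIntegral_one, by simpa using isIntegral_one, 0, isIntegral_zero, by simp⟩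
      · rintro a b _ _ ⟨ha1, ha2, α, hα, hαeq⟩ ⟨hb1, hb2, β, hβ, hβeq⟩
        refine ⟨by simpa using ha1.mul hb1, by simpa [mul_comm] using ha2.mul hb2,
          α + β + 3 * (α * β), ?_, ?_⟩
        · have h3 : IsIntegral ℤ (3 : ℂ) := by
            have : ((3 : ℤ) : ℂ) = (3 : ℂ) := by norm_num
            rw [← this]
            exact isIntegral_algebraMap
          exact (hα.add hβ).add (h3.mul (hα.mul hβ))
        · push_cast
          rw [hαeq, hβeq]
          ring
      · rintro a _ ⟨ha1, ha2, α, hα, hαeq⟩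
        refine ⟨by simpa using ha2, by simpa using ha1, -(((a⁻¹ : ℂˣ) : ℂ) * α), ?_, ?_⟩
        · exact ((by simpa using ha2 : IsIntegral ℤ ((a⁻¹ : ℂˣ) : ℂ)).mul hα).neg
        · have hane : (a : ℂ) ≠ 0 := Units.ne_zero a
          have hai : ((a⁻¹ : ℂˣ) : ℂ) = ((a : ℂ))⁻¹ := Units.val_inv_eq_inv_val a
          rw [hai]
          field_simp
          rw [hαeq]
          ring
    -- torsion-freeness
    intro x hx hord
    obtain ⟨m, hmpos, hxm⟩ := isOfFinOrder_iff_pow_eq_one.mp hord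
    obtain ⟨h1, h2, α, hα, hαeq⟩ := hinv (x : ℂˣ) x.2
    have hζm : ((x : ℂˣ) : ℂ) ^ m = 1 := by
      have : ((x ^ m : ↥(eigenvalueSubgroup n g)) : ℂˣ) = ((1 : ↥(eigenvalueSubgroup n g)) : ℂˣ) := by
        rw [hxm]
      have h2' : ((x : ℂˣ) : ℂ) ^ m = ((1 : ℂˣ) : ℂ) := by
        exact_mod_cast congrArg (fun u : ℂˣ => (u : ℂ)) this
      simpa using h2'
    have := root_of_unity_near_one _ m hmpos.ne' hζm α hα hαeq
    apply hx
    ext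
    exact congrArg _ (Units.ext this)
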